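/- Let N ≥ m ≥ 1 be integers and let S be the resampling matrix on ℝ^{Π(m)}. Then for every integer k ≥ 0 and all vectors v, f ∈ ℝ^{Π(m)}: | vᵀ (Id − S)^{k+1} f | ≤ ‖v‖_∞ · ( 2·(1 − N^{(m)}/N^m) )^{k+1} · ‖f‖₁. (This bounds the bias of the k-times iterated bootstrap applied to the moment polynomial with coefficient vector f and moment-product vector v.) -/

import Mathlib

open Finset
open scoped Classical

/-- The resampling matrix `S ∈ ℝ^{Π(m)×Π(m)}`:
`S_{π,σ} = N^{(#π)} / N^{#σ}` if `σ ≤ π`, and `0` otherwise. -/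
noncomputable def resampS (N m : ℕ) :
    Matrix (Finpartition (Finset.univ : Finset (Fin m)))
      (Finpartition (Finset.univ : Finset (Fin m))) ℝ :=
  fun π σ =>
    if σ ≤ π then (N.descFactorial π.parts.card : ℝ) / (N : ℝ) ^ σ.parts.card else 0

section Aux

variable {m : ℕ}

lemma descFactorial_mul_pow_le (N j d : ℕ) :
    N.descFactorial (j + d) * N ^ j ≤ N.descFactorial j * N ^ (j + d) := by
  induction d with
  | zero => simp
  | succ d ih =>
      have h1 : N.descFactorial (j + (d+1)) = (N - (j + d)) * N.descFactorial (j + d) := by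
        rw [← Nat.add_assoc, Nat.descFactorial_succ]
      rw [h1]
      calc (N - (j + d)) * N.descFactorial (j + d) * N ^ j
          ≤ N * (N.descFactorial (j + d) * N ^ j) := by
            rw [← Nat.mul_assoc]
            exact Nat.mul_le_mul_right _ (Nat.mul_le_mul_right _ (Nat.sub_le _ _))
        _ ≤ N * (N.descFactorial j * N ^ (j + d)) := Nat.mul_le_mul_left _ ih
        _ = N.descFactorial j * N ^ (j + (d+1)) := by ring

lemma part_subset_part {σ π : Finpartition (Finset.univ : Finset (Fin m))}
    (h : σ ≤ π) (x : Fin m) : σ.part x ⊆ π.part x := by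
  obtain ⟨c, hc, hsc⟩ := h (σ.part_mem.2 (mem_univ x))
  have : c = π.part x := (π.part_eq_of_mem hc (hsc (σ.mem_part (mem_univ x)))).symm
  exact this ▸ hsc

lemma finpartition_eq_of_part_eq {P Q : Finpartition (Finset.univ : Finset (Fin m))}
    (h : ∀ x, P.part x = Q.part x) : P = Q := by
  ext t
  constructor
  · intro ht
    obtain ⟨x, hx⟩ := P.nonempty_of_mem_parts ht
    have : t = P.part x := (P.part_eq_of_mem ht hx).symm
    rw [this, h x]
    exact Q.part_mem.2 (mem_univ x)
  · intro ht
    obtain ⟨x, hx⟩ := Q.nonempty_of_mem_parts ht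
    have : t = Q.part x := (Q.part_eq_of_mem ht hx).symm
    rw [this, ← h x]
    exact P.part_mem.2 (mem_univ x)

variable (σ : Finpartition (Finset.univ : Finset (Fin m)))

/-- The part containing `x`, as an element of the coercion type of `σ.parts`. -/
noncomputable def toPart (x : Fin m) : {t // t ∈ σ.parts} :=
  ⟨σ.part x, σ.part_mem.2 (mem_univ x)⟩

/-- A representative element of a part. -/
noncomputable def repOf (b : {t // t ∈ σ.parts}) : Fin m :=
  (σ.nonempty_of_mem_parts b.2).choose

lemma repOf_mem (b : {t // t ∈ σ.parts}) : repOf σ b ∈ b.1 :=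
  (σ.nonempty_of_mem_parts b.2).choose_spec

lemma toPart_repOf (b : {t // t ∈ σ.parts}) : toPart σ (repOf σ b) = b :=
  Subtype.ext (σ.part_eq_of_mem b.2 (repOf_mem σ b))

variable {N : ℕ}

/-- The kernel finpartition of a coloring of the parts of `σ`. -/
noncomputable def kerPart (h : {t // t ∈ σ.parts} → Fin N) :
    Finpartition (Finset.univ : Finset (Fin m)) :=
  Finpartition.ofSetoid
    ⟨fun a b => h (toPart σ a) = h (toPart σ b), ⟨fun _ => rfl, Eq.symm, Eq.trans⟩⟩

lemma mem_kerPart_part (h : {t // t ∈ σ.parts} → Fin N) (x y : Fin m) :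
    y ∈ (kerPart σ h).part x ↔ h (toPart σ x) = h (toPart σ y) :=
  Finpartition.mem_part_ofSetoid_iff_rel

lemma le_kerPart (h : {t // t ∈ σ.parts} → Fin N) : σ ≤ kerPart σ h := by
  intro t ht
  obtain ⟨x, hx⟩ := σ.nonempty_of_mem_parts ht
  refine ⟨(kerPart σ h).part x, (kerPart σ h).part_mem.2 (mem_univ x), fun y hy => ?_⟩
  rw [mem_kerPart_part]
  have hxy : σ.part x = σ.part y := by
    rw [σ.part_eq_of_mem ht hx, σ.part_eq_of_mem ht hy]
  exact congrArg h (Subtype.ext hxy)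

lemma kerPart_key (h : {t // t ∈ σ.parts} → Fin N)
    {π : Finpartition (Finset.univ : Finset (Fin m))} (hh : kerPart σ h = π) (x y : Fin m) :
    h (toPart σ x) = h (toPart σ y) ↔ π.part x = π.part y := by
  rw [← mem_kerPart_part σ h x y, hh,
    π.mem_part_iff_part_eq_part (mem_univ y) (mem_univ x)]
  exact eq_comm

/-- For `σ ≤ π`, colorings of the parts of `σ` with kernel partition `π` correspond to
injections of the parts of `π` into the colors. -/
noncomputable def kerFiberEquiv (π : Finpartition (Finset.univ : Finset (Fin m)))
    (hle : σ ≤ π) :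
    {h : {t // t ∈ σ.parts} → Fin N // kerPart σ h = π} ≃ ({t // t ∈ π.parts} ↪ Fin N) where
  toFun := fun ⟨h, hh⟩ =>
    ⟨fun b => h (toPart σ (repOf π b)), by
      intro b1 b2 hb
      have := (kerPart_key σ h hh _ _).1 hb
      have e1 : π.part (repOf π b1) = b1.1 := π.part_eq_of_mem b1.2 (repOf_mem π b1)
      have e2 : π.part (repOf π b2) = b2.1 := π.part_eq_of_mem b2.2 (repOf_mem π b2)
      exact Subtype.ext (by rw [← e1, ← e2, this])⟩
  invFun := fun e =>
    ⟨fun p => e ⟨π.part (repOf σ p), π.part_mem.2 (mem_univ _)⟩, by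
      have hg : ∀ x : Fin m,
          (⟨π.part (repOf σ (toPart σ x)), π.part_mem.2 (mem_univ _)⟩ : {t // t ∈ π.parts})
            = ⟨π.part x, π.part_mem.2 (mem_univ x)⟩ := by
        intro x
        apply Subtype.ext
        exact π.part_eq_of_mem (π.part_mem.2 (mem_univ x))
          (part_subset_part hle x (repOf_mem σ (toPart σ x)))
      apply finpartition_eq_of_part_eq
      intro x
      ext y
      rw [mem_kerPart_part]
      simp only [hg]
      constructor
      · intro hxy
        have hpp : π.part x = π.part y := Subtype.ext_iff.1 (e.injective hxy)
        rw [hpp]; exact π.mem_part (mem_univ y)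
      · intro hy
        have hpp : π.part y = π.part x :=
          (π.mem_part_iff_part_eq_part (mem_univ y) (mem_univ x)).1 hy
        congr 1
        exact Subtype.ext hpp.symm⟩
  left_inv := by
    rintro ⟨h, hh⟩
    apply Subtype.ext
    funext p
    simp only
    set b : {t // t ∈ π.parts} := ⟨π.part (repOf σ p), π.part_mem.2 (mem_univ _)⟩ with hb
    have h1 : π.part (repOf π b) = π.part (repOf σ p) :=
      π.part_eq_of_mem b.2 (repOf_mem π b)
    have h2 : h (toPart σ (repOf π b)) = h (toPart σ (repOf σ p)) :=
      (kerPart_key σ h hh _ _).2 h1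
    show h (toPart σ (repOf π b)) = h p
    rw [h2, toPart_repOf]
  right_inv := by
    intro e
    apply Function.Embedding.ext
    intro b
    simp only [Function.Embedding.coeFn_mk]
    show e _ = e b
    have h1 : repOf σ (toPart σ (repOf π b)) ∈ σ.part (repOf π b) :=
      repOf_mem σ (toPart σ (repOf π b))
    have h2 : repOf σ (toPart σ (repOf π b)) ∈ π.part (repOf π b) :=
      part_subset_part hle _ h1
    have h3 : π.part (repOf π b) = b.1 := π.part_eq_of_mem b.2 (repOf_mem π b)
    have h4 : π.part (repOf σ (toPart σ (repOf π b))) = b.1 :=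
      π.part_eq_of_mem b.2 (h3 ▸ h2)
    congr 1
    exact Subtype.ext h4

/-- The key counting identity: `∑_{π ≥ σ} N^{(#π)} = N^{#σ}`. -/
lemma sum_descFactorial_filter (N : ℕ) (σ : Finpartition (Finset.univ : Finset (Fin m))) :
    ∑ π ∈ Finset.univ.filter (fun π : Finpartition (Finset.univ : Finset (Fin m)) => σ ≤ π),
      N.descFactorial π.parts.card = N ^ σ.parts.card := by
  classical
  have hcard : Fintype.card ({t // t ∈ σ.parts} → Fin N) = N ^ σ.parts.card := by
    simp [Fintype.card_fun]
  rw [← hcard, Fintype.card]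
  rw [Finset.card_eq_sum_card_fiberwise
    (f := fun h : {t // t ∈ σ.parts} → Fin N => kerPart σ h)
    (t := Finset.univ.filter (fun π => σ ≤ π))
    (fun h _ => by simp [le_kerPart σ h])]
  refine Finset.sum_congr rfl fun π hπ => ?_
  have hle : σ ≤ π := (Finset.mem_filter.1 hπ).2
  have hcs : (Finset.univ.filter fun h : {t // t ∈ σ.parts} → Fin N => kerPart σ h = π).card
      = Fintype.card {h : {t // t ∈ σ.parts} → Fin N // kerPart σ h = π} := by
    rw [Fintype.card_subtype]
  rw [hcs, Fintype.card_congr (kerFiberEquiv σ π hle), Fintype.card_embedding_eq,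
    Fintype.card_coe, Fintype.card_fin]

end Aux

theorem iterated_bootstrap_bias_bound (N m : ℕ) (hm : 1 ≤ m) (hN : m ≤ N) (k : ℕ)
    (v f : Finpartition (Finset.univ : Finset (Fin m)) → ℝ) :
    |∑ π : Finpartition (Finset.univ : Finset (Fin m)),
        v π * ((1 - resampS N m) ^ (k + 1)).mulVec f π| ≤
      (⨆ π : Finpartition (Finset.univ : Finset (Fin m)), |v π|) *
        (2 * (1 - (N.descFactorial m : ℝ) / (N : ℝ) ^ m)) ^ (k + 1) *
        ∑ π : Finpartition (Finset.univ : Finset (Fin m)), |f π| := by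
  classical
  have hN1 : 1 ≤ N := le_trans hm hN
  have hNpos : (0 : ℝ) < N := by exact_mod_cast hN1
  have hpowpos : ∀ j : ℕ, (0 : ℝ) < (N : ℝ) ^ j := fun j => pow_pos hNpos j
  set c : ℝ := 2 * (1 - (N.descFactorial m : ℝ) / (N : ℝ) ^ m) with hc
  have hS_nonneg : ∀ π σ : Finpartition (Finset.univ : Finset (Fin m)),
      0 ≤ resampS N m π σ := by
    intro π σ
    unfold resampS
    split
    · positivity
    · exact le_refl 0
  -- column sums of S are 1
  have hcol_one : ∀ σ : Finpartition (Finset.univ : Finset (Fin m)),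
      ∑ π : Finpartition (Finset.univ : Finset (Fin m)), resampS N m π σ = 1 := by
    intro σ
    have h1 : ∑ π : Finpartition (Finset.univ : Finset (Fin m)), resampS N m π σ
        = ∑ π ∈ Finset.univ.filter
            (fun π : Finpartition (Finset.univ : Finset (Fin m)) => σ ≤ π),
            (N.descFactorial π.parts.card : ℝ) / (N : ℝ) ^ σ.parts.card := by
      rw [Finset.sum_filter]
      rfl
    rw [h1, ← Finset.sum_div]
    rw [← Nat.cast_sum, sum_descFactorial_filter N σ]
    rw [Nat.cast_pow]
    exact div_self (ne_of_gt (hpowpos _))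
  -- the diagonal entries
  have hdiag : ∀ σ : Finpartition (Finset.univ : Finset (Fin m)),
      resampS N m σ σ = (N.descFactorial σ.parts.card : ℝ) / (N : ℝ) ^ σ.parts.card := by
    intro σ
    unfold resampS
    rw [if_pos le_rfl]
  have hdiag_le_one : ∀ σ : Finpartition (Finset.univ : Finset (Fin m)),
      resampS N m σ σ ≤ 1 := by
    intro σ
    rw [hdiag]
    rw [div_le_one (hpowpos _)]
    exact_mod_cast Nat.descFactorial_le_pow N σ.parts.card
  have hdiag_ge : ∀ σ : Finpartition (Finset.univ : Finset (Fin m)),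
      (N.descFactorial m : ℝ) / (N : ℝ) ^ m ≤ resampS N m σ σ := by
    intro σ
    rw [hdiag]
    set j := σ.parts.card with hj
    have hjm : j ≤ m := by
      have := σ.card_parts_le_card
      simpa using this
    rw [div_le_div_iff₀ (hpowpos m) (hpowpos j)]
    have key := descFactorial_mul_pow_le N j (m - j)
    rw [Nat.add_sub_cancel' hjm] at key
    exact_mod_cast key
  have hSmm_le_one : (N.descFactorial m : ℝ) / (N : ℝ) ^ m ≤ 1 := by
    rw [div_le_one (hpowpos _)]
    exact_mod_cast Nat.descFactorial_le_pow N m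
  have hc0 : 0 ≤ c := by
    rw [hc]
    nlinarith [hSmm_le_one]
  -- absolute column sums of 1 - S
  have hcolabs : ∀ σ : Finpartition (Finset.univ : Finset (Fin m)),
      ∑ π : Finpartition (Finset.univ : Finset (Fin m)), |(1 - resampS N m) π σ| ≤ c := by
    intro σ
    have happ : ∀ π, (1 - resampS N m) π σ
        = (if π = σ then (1:ℝ) else 0) - resampS N m π σ := by
      intro π
      simp [Matrix.sub_apply, Matrix.one_apply]
    have hsplit : ∑ π : Finpartition (Finset.univ : Finset (Fin m)), |(1 - resampS N m) π σ|
        = |1 - resampS N m σ σ|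
          + ∑ π ∈ Finset.univ.erase σ, |(1 - resampS N m) π σ| := by
      rw [← Finset.add_sum_erase _ _ (Finset.mem_univ σ), happ σ, if_pos rfl]
    have herase : ∑ π ∈ Finset.univ.erase σ, |(1 - resampS N m) π σ|
        = ∑ π ∈ Finset.univ.erase σ, resampS N m π σ := by
      refine Finset.sum_congr rfl fun π hπ => ?_
      have hne : π ≠ σ := (Finset.mem_erase.1 hπ).1
      rw [happ π, if_neg hne, zero_sub, abs_neg, abs_of_nonneg (hS_nonneg π σ)]
    have herase2 : ∑ π ∈ Finset.univ.erase σ, resampS N m π σ = 1 - resampS N m σ σ := by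
      have := Finset.add_sum_erase Finset.univ (fun π => resampS N m π σ) (Finset.mem_univ σ)
      have hc1 := hcol_one σ
      linarith [this, hc1]
    have habs : |1 - resampS N m σ σ| = 1 - resampS N m σ σ :=
      abs_of_nonneg (by linarith [hdiag_le_one σ])
    rw [hsplit, herase, herase2, habs, hc]
    have := hdiag_ge σ
    linarith
  -- ℓ¹ contraction
  have hcontract : ∀ g : Finpartition (Finset.univ : Finset (Fin m)) → ℝ,
      ∑ π : Finpartition (Finset.univ : Finset (Fin m)), |(1 - resampS N m).mulVec g π|
        ≤ c * ∑ π : Finpartition (Finset.univ : Finset (Fin m)), |g π| := by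
    intro g
    have h1 : ∀ π : Finpartition (Finset.univ : Finset (Fin m)),
        |(1 - resampS N m).mulVec g π|
          ≤ ∑ σ : Finpartition (Finset.univ : Finset (Fin m)), |(1 - resampS N m) π σ| * |g σ| := by
      intro π
      rw [show (1 - resampS N m).mulVec g π
          = ∑ σ : Finpartition (Finset.univ : Finset (Fin m)), (1 - resampS N m) π σ * g σ
        from rfl]
      refine le_trans (Finset.abs_sum_le_sum_abs _ _) ?_
      exact le_of_eq (Finset.sum_congr rfl fun σ _ => abs_mul _ _)
    calc ∑ π : Finpartition (Finset.univ : Finset (Fin m)), |(1 - resampS N m).mulVec g π|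
        ≤ ∑ π : Finpartition (Finset.univ : Finset (Fin m)),
            ∑ σ : Finpartition (Finset.univ : Finset (Fin m)),
              |(1 - resampS N m) π σ| * |g σ| := Finset.sum_le_sum fun π _ => h1 π
      _ = ∑ σ : Finpartition (Finset.univ : Finset (Fin m)),
            (∑ π : Finpartition (Finset.univ : Finset (Fin m)), |(1 - resampS N m) π σ|) * |g σ| := by
          rw [Finset.sum_comm]
          exact Finset.sum_congr rfl fun σ _ => (Finset.sum_mul _ _ _).symm
      _ ≤ ∑ σ : Finpartition (Finset.univ : Finset (Fin m)), c * |g σ| :=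
          Finset.sum_le_sum fun σ _ => mul_le_mul_of_nonneg_right (hcolabs σ) (abs_nonneg _)
      _ = c * ∑ σ : Finpartition (Finset.univ : Finset (Fin m)), |g σ| := by
          rw [Finset.mul_sum]
  -- iterate
  have hiter : ∀ n : ℕ,
      ∑ π : Finpartition (Finset.univ : Finset (Fin m)), |((1 - resampS N m) ^ n).mulVec f π|
        ≤ c ^ n * ∑ π : Finpartition (Finset.univ : Finset (Fin m)), |f π| := by
    intro n
    induction n with
    | zero => simp [Matrix.one_mulVec]
    | succ n ih =>
        have hrw : ((1 - resampS N m) ^ (n + 1)).mulVec f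
            = (1 - resampS N m).mulVec (((1 - resampS N m) ^ n).mulVec f) := by
          rw [pow_succ']
          rw [← Matrix.mulVec_mulVec]
        rw [hrw]
        calc ∑ π : Finpartition (Finset.univ : Finset (Fin m)),
              |(1 - resampS N m).mulVec (((1 - resampS N m) ^ n).mulVec f) π|
            ≤ c * ∑ π : Finpartition (Finset.univ : Finset (Fin m)),
                |((1 - resampS N m) ^ n).mulVec f π| := hcontract _
          _ ≤ c * (c ^ n * ∑ π : Finpartition (Finset.univ : Finset (Fin m)), |f π|) :=
              mul_le_mul_of_nonneg_left ih hc0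
          _ = c ^ (n + 1) * ∑ π : Finpartition (Finset.univ : Finset (Fin m)), |f π| := by
              ring
  -- finish
  haveI : Nonempty (Finpartition (Finset.univ : Finset (Fin m))) := ⟨⊥⟩
  have hbdd : BddAbove (Set.range fun π : Finpartition (Finset.univ : Finset (Fin m)) => |v π|) :=
    Set.Finite.bddAbove (Set.finite_range _)
  have hvle : ∀ π : Finpartition (Finset.univ : Finset (Fin m)),
      |v π| ≤ ⨆ π : Finpartition (Finset.univ : Finset (Fin m)), |v π| :=
    fun π => le_ciSup hbdd π
  have hsup0 : 0 ≤ ⨆ π : Finpartition (Finset.univ : Finset (Fin m)), |v π| :=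
    le_trans (abs_nonneg _) (hvle ⊥)
  calc |∑ π : Finpartition (Finset.univ : Finset (Fin m)),
          v π * ((1 - resampS N m) ^ (k + 1)).mulVec f π|
      ≤ ∑ π : Finpartition (Finset.univ : Finset (Fin m)),
          |v π| * |((1 - resampS N m) ^ (k + 1)).mulVec f π| := by
        refine le_trans (Finset.abs_sum_le_sum_abs _ _) ?_
        exact le_of_eq (Finset.sum_congr rfl fun π _ => abs_mul _ _)
    _ ≤ ∑ π : Finpartition (Finset.univ : Finset (Fin m)),
          (⨆ π : Finpartition (Finset.univ : Finset (Fin m)), |v π|)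
            * |((1 - resampS N m) ^ (k + 1)).mulVec f π| :=
        Finset.sum_le_sum fun π _ => mul_le_mul_of_nonneg_right (hvle π) (abs_nonneg _)
    _ = (⨆ π : Finpartition (Finset.univ : Finset (Fin m)), |v π|)
          * ∑ π : Finpartition (Finset.univ : Finset (Fin m)),
              |((1 - resampS N m) ^ (k + 1)).mulVec f π| := by rw [Finset.mul_sum]
    _ ≤ (⨆ π : Finpartition (Finset.univ : Finset (Fin m)), |v π|)
          * (c ^ (k + 1) * ∑ π : Finpartition (Finset.univ : Finset (Fin m)), |f π|) :=
        mul_le_mul_of_nonneg_left (hiter (k + 1)) hsup0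
    _ = (⨆ π : Finpartition (Finset.univ : Finset (Fin m)), |v π|) * c ^ (k + 1)
          * ∑ π : Finpartition (Finset.univ : Finset (Fin m)), |f π| := by ring
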